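/- For all n ≥ 1, the identity Σ_{k=0}^{n} C(n,k)^2 x^k = Σ_{k=0}^{⌊n/2⌋} C(2k,k) C(n,2k) x^k (1+x)^{n−2k} holds as an identity of polynomials in x. -/

import Mathlib

open Finset

private lemma key_choose (n m k : ℕ) (hkm : k ≤ m) (hmn : m ≤ n) :
    (2 * k).choose k * n.choose (2 * k) * (n - 2 * k).choose (m - k) =
      n.choose m * (m.choose k * (n - m).choose k) := by
  rcases le_or_gt (m + k) n with h | h
  · have h2k : 2 * k ≤ n := by omega
    have e1 : n.choose (2 * k) * (2 * k).choose k = n.choose k * (n - k).choose k := by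
      have := Nat.choose_mul (n := n) (show k ≤ 2 * k by omega)
      rwa [show 2 * k - k = k by omega] at this
    have e2 : n.choose m * m.choose k = n.choose k * (n - k).choose (m - k) :=
      Nat.choose_mul (n := n) hkm
    have e3 : (n - k).choose m * m.choose k = (n - k).choose k * (n - 2 * k).choose (m - k) := by
      have := Nat.choose_mul (n := n - k) hkm
      rwa [show n - k - k = n - 2 * k by omega] at this
    have e4 : (n - k).choose m * m.choose k = (n - k).choose (m - k) * (n - m).choose k := by
      have := Nat.choose_mul (n := n - k) (show m - k ≤ m by omega)
      rw [show n - k - (m - k) = n - m by omega, show m - (m - k) = k by omega,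
        Nat.choose_symm hkm] at this
      exact this
    have e5 : (n - k).choose k * (n - 2 * k).choose (m - k)
        = (n - k).choose (m - k) * (n - m).choose k := by rw [← e3, e4]
    calc (2 * k).choose k * n.choose (2 * k) * (n - 2 * k).choose (m - k)
        = n.choose k * ((n - k).choose k * (n - 2 * k).choose (m - k)) := by
          rw [mul_comm ((2 * k).choose k), e1]; ring
      _ = n.choose k * ((n - k).choose (m - k) * (n - m).choose k) := by rw [e5]
      _ = n.choose m * (m.choose k * (n - m).choose k) := by
          rw [← mul_assoc, ← e2]; ring
  · have hz : (n - m).choose k = 0 := Nat.choose_eq_zero_of_lt (by omega)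
    rcases le_or_gt (2 * k) n with h2 | h2
    · have hz2 : (n - 2 * k).choose (m - k) = 0 := Nat.choose_eq_zero_of_lt (by omega)
      simp [hz, hz2]
    · have hz2 : n.choose (2 * k) = 0 := Nat.choose_eq_zero_of_lt h2
      simp [hz, hz2]

private lemma vandermonde' (n m : ℕ) (hmn : m ≤ n) :
    n.choose m = ∑ k ∈ Finset.range (m + 1), m.choose k * (n - m).choose k := by
  have h := Nat.add_choose_eq m (n - m) m
  rw [Nat.add_sub_cancel' hmn] at h
  rw [h, Finset.Nat.sum_antidiagonal_eq_sum_range_succ_mk, ← Finset.sum_range_reflect]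
  refine Finset.sum_congr rfl fun k hk => ?_
  simp only [Finset.mem_range] at hk
  rw [show m + 1 - 1 - k = m - k by omega, show m - (m - k) = k by omega,
    Nat.choose_symm (show k ≤ m by omega)]

private lemma coeff_eq (n m : ℕ) (hmn : m ≤ n) :
    n.choose m ^ 2 = ∑ k ∈ Finset.range (m + 1),
      (2 * k).choose k * n.choose (2 * k) * (n - 2 * k).choose (m - k) := by
  calc n.choose m ^ 2
      = n.choose m * n.choose m := sq (n.choose m)
    _ = n.choose m * ∑ k ∈ Finset.range (m + 1), m.choose k * (n - m).choose k := by
        rw [← vandermonde' n m hmn]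
    _ = ∑ k ∈ Finset.range (m + 1), n.choose m * (m.choose k * (n - m).choose k) :=
        Finset.mul_sum _ _ _
    _ = _ := by
        refine Finset.sum_congr rfl fun k hk => ?_
        simp only [Finset.mem_range] at hk
        exact (key_choose n m k (by omega) hmn).symm

/-- Gamma-expansion of the `h`-polynomial of the type `B` associahedron: for `n ≥ 1`,
`Σ_{k=0}^{n} C(n,k)² x^k = Σ_{k=0}^{⌊n/2⌋} C(2k,k) C(n,2k) x^k (1+x)^{n−2k}`. -/
theorem typeB_associahedron_gamma_expansion (n : ℕ) (hn : 1 ≤ n) (x : ℝ) :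
    ∑ k ∈ Finset.range (n + 1), (n.choose k : ℝ) ^ 2 * x ^ k =
      ∑ k ∈ Finset.range (n / 2 + 1),
        ((2 * k).choose k : ℝ) * (n.choose (2 * k)) * x ^ k * (1 + x) ^ (n - 2 * k) := by
  have step1 : ∑ k ∈ Finset.range (n + 1), (n.choose k : ℝ) ^ 2 * x ^ k
      = ∑ m ∈ Finset.Ico 0 (n + 1), ∑ k ∈ Finset.Ico 0 (m + 1),
          (((2 * k).choose k : ℝ) * (n.choose (2 * k)) * ((n - 2 * k).choose (m - k))) * x ^ m := by
    rw [Finset.range_eq_Ico]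
    refine Finset.sum_congr rfl fun m hm => ?_
    simp only [Finset.mem_Ico] at hm
    rw [← Finset.sum_mul, ← Finset.range_eq_Ico]
    congr 1
    have := coeff_eq n m (by omega)
    have : ((n.choose m : ℕ) ^ 2 : ℝ) = ((∑ k ∈ Finset.range (m + 1),
        (2 * k).choose k * n.choose (2 * k) * (n - 2 * k).choose (m - k) : ℕ) : ℝ) := by
      exact_mod_cast congrArg (Nat.cast (R := ℝ)) this
    push_cast at this
    exact this
  rw [step1, ← Finset.sum_Ico_Ico_comm 0 (n + 1) (fun k m =>
      (((2 * k).choose k : ℝ) * (n.choose (2 * k)) * ((n - 2 * k).choose (m - k))) * x ^ m)]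
  rw [← Finset.range_eq_Ico]
  have inner : ∀ k ∈ Finset.range (n + 1),
      (∑ m ∈ Finset.Ico k (n + 1),
        (((2 * k).choose k : ℝ) * (n.choose (2 * k)) * ((n - 2 * k).choose (m - k))) * x ^ m)
      = ((2 * k).choose k : ℝ) * (n.choose (2 * k)) * x ^ k * (1 + x) ^ (n - 2 * k) := by
    intro k hk
    simp only [Finset.mem_range] at hk
    rcases le_or_gt (2 * k) n with h2 | h2
    · have hpow : (1 + x) ^ (n - 2 * k)
          = ∑ j ∈ Finset.range (n - 2 * k + 1), ((n - 2 * k).choose j : ℝ) * x ^ j := by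
        rw [add_comm 1 x, add_pow]
        simp only [one_pow, mul_one]
        exact Finset.sum_congr rfl fun j _ => mul_comm _ _
      rw [Finset.sum_Ico_eq_sum_range, hpow, Finset.mul_sum]
      rw [show n + 1 - k = n - 2 * k + 1 + k by omega]
      rw [Finset.sum_range_add]
      have hz : ∀ i, (((2 * k).choose k : ℝ) * (n.choose (2 * k))
          * ((n - 2 * k).choose ((k + (n - 2 * k + 1 + i)) - k))) * x ^ (k + (n - 2 * k + 1 + i))
          = 0 := by
        intro i
        have : ((n - 2 * k).choose ((k + (n - 2 * k + 1 + i)) - k) : ℝ) = 0 := by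
          rw [Nat.choose_eq_zero_of_lt (by omega)]; simp
        rw [this]; ring
      rw [Finset.sum_congr rfl fun i _ => hz i, Finset.sum_const, smul_zero, add_zero]
      refine Finset.sum_congr rfl fun j hj => ?_
      rw [show (k + j) - k = j by omega, pow_add]
      ring
    · have hzz : (n.choose (2 * k) : ℝ) = 0 := by
        rw [Nat.choose_eq_zero_of_lt h2]; simp
      simp [hzz]
  rw [Finset.sum_congr rfl inner]
  symm
  apply Finset.sum_subset
  · intro k hk
    simp only [Finset.mem_range] at hk ⊢
    omega
  · intro k _ hk2
    simp only [Finset.mem_range] at hk2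
    have : (n.choose (2 * k) : ℝ) = 0 := by
      rw [Nat.choose_eq_zero_of_lt (by omega)]; simp
    simp [this]
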